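/- For every odd prime p, one has 2·∑_{x} σ₁((p²−x²)/4) = ∑_{k=1}^{p−1} σ₁(k)·σ₁(p−k), where the sum on the left runs over the odd integers x with 0 < x < p (for such x, (p²−x²)/4 is a positive integer). -/

import Mathlib

/-- `σ₁(n)`, the sum of the positive divisors of `n`. -/
def sigma1 (n : ℕ) : ℕ := ∑ d ∈ n.divisors, d

lemma sigma1_eq (n : ℕ) : sigma1 n = ArithmeticFunction.sigma 1 n := by
  simp [sigma1, ArithmeticFunction.sigma_apply]

lemma sigma1_mul_coprime {a b : ℕ} (h : Nat.Coprime a b) :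
    sigma1 (a * b) = sigma1 a * sigma1 b := by
  rw [sigma1_eq, sigma1_eq, sigma1_eq,
    ArithmeticFunction.isMultiplicative_sigma.map_mul_of_coprime h]

/-- For every odd prime `p`,
`2·∑_{x odd, 0 < x < p} σ₁((p²−x²)/4) = ∑_{k=1}^{p−1} σ₁(k)·σ₁(p−k)`. -/
theorem two_mul_sum_sigma_eq_sum_sigma_mul_sigma (p : ℕ) (hp : p.Prime)
    (hodd : p % 2 = 1) :
    2 * ∑ x ∈ (Finset.Ioo 0 p).filter (fun x => Odd x), sigma1 ((p ^ 2 - x ^ 2) / 4) =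
      ∑ k ∈ Finset.Icc 1 (p - 1), sigma1 k * sigma1 (p - k) := by
  have hp2 : 2 ≤ p := hp.two_le
  obtain ⟨m, hm⟩ : ∃ m, p = 2 * m + 1 := ⟨p / 2, by omega⟩
  have hm1 : 1 ≤ m := by omega
  -- Step 1: reindex the LHS sum by i = (p - x)/2, x = p - 2i.
  have hLHS : ∑ x ∈ (Finset.Ioo 0 p).filter (fun x => Odd x), sigma1 ((p ^ 2 - x ^ 2) / 4)
      = ∑ i ∈ Finset.Icc 1 m, sigma1 (i * (p - i)) := by
    refine Finset.sum_nbij' (fun x => (p - x) / 2) (fun i => p - 2 * i) ?_ ?_ ?_ ?_ ?_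
    · intro x hx
      simp only [Finset.mem_filter, Finset.mem_Ioo] at hx
      obtain ⟨⟨hx0, hxp⟩, hxo⟩ := hx
      obtain ⟨t, ht⟩ := hxo
      simp only [Finset.mem_Icc]
      omega
    · intro i hi
      simp only [Finset.mem_Icc] at hi
      simp only [Finset.mem_filter, Finset.mem_Ioo]
      refine ⟨⟨by omega, by omega⟩, ⟨m - i, by omega⟩⟩
    · intro x hx
      simp only [Finset.mem_filter, Finset.mem_Ioo] at hx
      obtain ⟨⟨hx0, hxp⟩, t, ht⟩ := hx
      omega
    · intro i hi
      simp only [Finset.mem_Icc] at hi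
      omega
    · intro x hx
      simp only [Finset.mem_filter, Finset.mem_Ioo] at hx
      obtain ⟨⟨hx0, hxp⟩, t, ht⟩ := hx
      have hx' : x = 2 * t + 1 := by omega
      have htm : t < m := by omega
      obtain ⟨s, hs⟩ : ∃ s, m = t + s + 1 := ⟨m - t - 1, by omega⟩
      have h1 : (p - x) / 2 = s + 1 := by omega
      rw [h1]
      have h2 : p ^ 2 - x ^ 2 = 4 * ((s + 1) * (p - (s + 1))) := by
        have hps : p - (s + 1) = m + t + 1 := by omega
        rw [hps]
        have hkey : x ^ 2 + 4 * ((s + 1) * (m + t + 1)) = p ^ 2 := by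
          subst hx' hm hs; ring
        omega
      rw [h2, Nat.mul_div_cancel_left _ (by norm_num)]
  rw [hLHS]
  -- Step 2: multiplicativity.
  have hkey : ∀ i ∈ Finset.Icc 1 m, sigma1 (i * (p - i)) = sigma1 i * sigma1 (p - i) := by
    intro i hi
    simp only [Finset.mem_Icc] at hi
    apply sigma1_mul_coprime
    have hip : i.Coprime p :=
      ((hp.coprime_iff_not_dvd).mpr (fun h => by
        have := Nat.le_of_dvd (by omega) h; omega)).symm
    have h2 : i.Coprime ((p - i) + i) := by rwa [Nat.sub_add_cancel (by omega)]
    exact Nat.coprime_add_self_right.mp h2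
  rw [Finset.sum_congr rfl hkey]
  -- Step 3: symmetry of the RHS.
  have hsplit : Finset.Icc 1 (p - 1) = Finset.Icc 1 m ∪ Finset.Icc (m + 1) (p - 1) := by
    ext k; simp only [Finset.mem_union, Finset.mem_Icc]; omega
  have hdisj : Disjoint (Finset.Icc 1 m) (Finset.Icc (m + 1) (p - 1)) := by
    rw [Finset.disjoint_left]; intro k hk hk'
    simp only [Finset.mem_Icc] at hk hk'; omega
  rw [hsplit, Finset.sum_union hdisj]
  have hupper : ∑ k ∈ Finset.Icc (m + 1) (p - 1), sigma1 k * sigma1 (p - k)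
      = ∑ i ∈ Finset.Icc 1 m, sigma1 i * sigma1 (p - i) := by
    refine Finset.sum_nbij' (fun k => p - k) (fun i => p - i) ?_ ?_ ?_ ?_ ?_
    · intro k hk; simp only [Finset.mem_Icc] at *; omega
    · intro i hi; simp only [Finset.mem_Icc] at *; omega
    · intro k hk; simp only [Finset.mem_Icc] at hk; omega
    · intro i hi; simp only [Finset.mem_Icc] at hi; omega
    · intro k hk; simp only [Finset.mem_Icc] at hk
      have : p - (p - k) = k := by omega
      rw [this, mul_comm]
  rw [hupper, two_mul]
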